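/- arXiv:2209.10725 — 4 statements merged into one kernel-verified Lean document; each statement's English description precedes it below -/
import Mathlib

section
/- Let j be a positive even integer and define A_n^0 and C_n^0 as for the para-Bannai-Ito polynomials with N = 2j: A_n^0 = -(n-j-a)/4 if n even, n ≠ j; A_n^0 = -(n+1)(n-j-b)/(4(n-j)) if n odd; A_j^0 = (1-α)a/2; C_n^0 = (n-j+a)/4 if n even, n ≠ j; C_n^0 = (n-2j-1)(n-j+b)/(4(n-j)) if n odd; C_j^0 = αa/2. If α = 1/2, then for all 0 ≤ n ≤ 2j one has A_n^0 = C_{2j-n}^0 and C_n^0 = A_{2j-n}^0. -/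
/-- Recurrence coefficient `A_n^0` of the para-Bannai-Ito polynomials, `N = 2j`, `j` even. -/
noncomputable def A0 (j : ℕ) (a b α : ℝ) (n : ℕ) : ℝ :=
  if n = j then (1 - α) * a / 2
  else if n % 2 = 0 then -((n : ℝ) - j - a) / 4
  else -(((n : ℝ) + 1) * ((n : ℝ) - j - b)) / (4 * ((n : ℝ) - j))

/-- Recurrence coefficient `C_n^0` of the para-Bannai-Ito polynomials, `N = 2j`, `j` even. -/
noncomputable def C0 (j : ℕ) (a b α : ℝ) (n : ℕ) : ℝ :=
  if n = j then α * a / 2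
  else if n % 2 = 0 then ((n : ℝ) - j + a) / 4
  else (((n : ℝ) - 2 * j - 1) * ((n : ℝ) - j + b)) / (4 * ((n : ℝ) - j))

/-- Mirror symmetry of the para-Bannai-Ito recurrence coefficients at `α = 1/2`. -/
theorem stmt1 (j : ℕ) (hj : Even j) (hj0 : 0 < j) (a b : ℝ) :
    ∀ n ≤ 2 * j,
      A0 j a b (1/2) n = C0 j a b (1/2) (2 * j - n) ∧
      C0 j a b (1/2) n = A0 j a b (1/2) (2 * j - n) := by
  intro n hn
  have hcast : ((2 * j - n : ℕ) : ℝ) = 2 * (j : ℝ) - n := by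
    push_cast [Nat.cast_sub hn]; ring
  by_cases hnj : n = j
  · subst hnj
    have h2 : 2 * n - n = n := by omega
    constructor <;> simp only [A0, C0, h2, if_pos (rfl : n = n)] <;> ring
  · have hmj : 2 * j - n ≠ j := by omega
    rcases Nat.even_or_odd n with he | ho
    · have hnn : n % 2 = 0 := Nat.even_iff.mp he
      have hmm : (2 * j - n) % 2 = 0 := by omega
      simp only [A0, C0, if_neg hnj, if_neg hmj, hnn, hmm, if_pos, hcast, ite_true]
      constructor <;> ring
    · have hnn' : n % 2 = 1 := Nat.odd_iff.mp ho
      have hnn : ¬ n % 2 = 0 := by omega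
      have hmm : ¬ (2 * j - n) % 2 = 0 := by omega
      have h1 : (n : ℝ) - j ≠ 0 := by
        intro h
        exact hnj (Nat.cast_injective (by linarith : (n : ℝ) = j))
      have h2 : 2 * (j : ℝ) - n - j ≠ 0 := by
        intro h; apply h1; linarith
      simp only [A0, C0, if_neg hnj, if_neg hmj, if_neg hnn, if_neg hmm, hcast]
      have h3 : (j : ℝ) - n ≠ 0 := by
        intro h; apply h1; linarith
      rw [show 2 * (j : ℝ) - n - j = -((n : ℝ) - j) by ring]
      constructor <;> (field_simp [h1, h2, h3]; ring)
end

section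
/- Let j be a positive even integer and set a = -j-1, b = 0, α = 1/2 in the para-Bannai-Ito recurrence coefficients for N = 2j (A_n^0 = -(n-j-a)/4 if n even ≠ j, A_n^0 = -(n+1)(n-j-b)/(4(n-j)) if n odd, A_j^0 = (1-α)a/2; C_n^0 = (n-j+a)/4 if n even ≠ j, C_n^0 = (n-2j-1)(n-j+b)/(4(n-j)) if n odd, C_j^0 = αa/2). Then for every n with 1 ≤ n ≤ 2j, the diagonal recurrence coefficient (b-j-1+a)/4 - A_n^0 - C_n^0 equals 0 and the off-diagonal product A_{n-1}^0 C_n^0 equals n(2j+1-n)/16. -/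
/-- At `a = -j-1`, `b = 0`, `α = 1/2` the para-Bannai-Ito recurrence reduces to the
monic symmetric Krawtchouk recurrence. -/
theorem stmt3 (j : ℕ) (hj : Even j) (hj0 : 0 < j) :
    ∀ n : ℕ, 1 ≤ n → n ≤ 2 * j →
      ((0 : ℝ) - j - 1 + (-(j : ℝ) - 1)) / 4
          - A0 j (-(j : ℝ) - 1) 0 (1/2) n - C0 j (-(j : ℝ) - 1) 0 (1/2) n = 0 ∧
      A0 j (-(j : ℝ) - 1) 0 (1/2) (n - 1) * C0 j (-(j : ℝ) - 1) 0 (1/2) n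
          = (n : ℝ) * (2 * (j : ℝ) + 1 - n) / 16 := by
  intro n h1 h2
  have hj2 : j % 2 = 0 := Nat.even_iff.mp hj
  have hc : ((n - 1 : ℕ) : ℝ) = (n : ℝ) - 1 := by
    push_cast [Nat.cast_sub h1]; ring
  have key : ∀ m : ℕ, m ≠ j → ((m : ℝ) - j) ≠ 0 := fun m hm =>
    sub_ne_zero.mpr (by exact_mod_cast hm)
  rcases eq_or_ne n j with rfl | hnj
  · -- n = j, even; n-1 odd, ≠ j
    have h1j : n - 1 ≠ n := by omega
    have h1o : (n - 1) % 2 = 1 := by omega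
    have hne : ((n : ℝ) - 1 - n) ≠ 0 := by
      intro h; have : (n:ℝ) - 1 = n := by linarith [sub_eq_zero.mp h]
      linarith
    simp only [A0, C0, if_pos rfl, if_neg h1j, h1o, hj2]
    norm_num [hc]
    constructor
    · ring
    · field_simp
      ring
  · rcases Nat.even_or_odd n with he | ho
    · -- n even ≠ j; n-1 odd ≠ j
      have hn2 : n % 2 = 0 := Nat.even_iff.mp he
      have h1j : n - 1 ≠ j := by omega
      have h1o : (n - 1) % 2 = 1 := by omega
      have hA := key (n - 1) h1j
      rw [hc] at hA
      simp only [A0, C0, if_neg hnj, if_neg h1j, hn2, h1o, hc]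
      norm_num
      constructor
      · ring
      · field_simp
        ring
    · have hn2 : n % 2 = 1 := Nat.odd_iff.mp ho
      have hC := key n hnj
      rcases eq_or_ne (n - 1) j with hnj1 | hnj1
      · -- n - 1 = j
        have hjn : (j : ℝ) = (n : ℝ) - 1 := by rw [← hnj1, hc]
        simp only [A0, C0, if_pos hnj1, if_neg hnj, hn2]
        norm_num [hjn]
        constructor
        · field_simp
          ring
        · field_simp
          ring
      · have h1e : (n - 1) % 2 = 0 := by omega
        simp only [A0, C0, if_neg hnj, if_neg hnj1, hn2, h1e, hc]
        norm_num
        constructor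
        · field_simp
          ring
        · field_simp
          ring
end

section
/- Let j be a positive even integer, a, b real, and n an even integer with 0 ≤ n ≤ 2j+1 and n ≠ j. For ε > 0, set q = -e^ε, c = i·exp(ε(a+b-j)/2), d = i·exp(ε(-a+b-j)/2), and A_n^R(ε) = (1 - c d q^n)(d - c q^{n-j})(1 - q^{n-2j-1}) / (2 c d (1 - q^{2n-2j-1})(1 + q^{n-j})). Then the limit as ε → 0⁺ of A_n^R(ε)/(2iε) exists and equals (n - j + a)/4. -/
open Filter

private lemma negexp_zpow_even (z : ℂ) (m : ℤ) (hm : Even m) :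
    (-Complex.exp z) ^ m = Complex.exp (m * z) := by
  rw [show -Complex.exp z = (-1) * Complex.exp z by ring, mul_zpow, hm.neg_one_zpow, one_mul,
    Complex.exp_int_mul]

/-- Under `q = -e^ε`, `c = i e^{ε(a+b-j)/2}`, `d = i e^{ε(-a+b-j)/2}`, the `q → -1`
(`ε → 0⁺`) limit of the q-para-Racah recurrence coefficient `A_n^R/(2iε)` for even
`n ≠ j` is the para-Bannai-Ito coefficient `(n - j + a)/4`. -/
theorem stmt9 (j : ℕ) (hj : Even j) (hj0 : 0 < j) (a b : ℝ) (n : ℕ)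
    (hn : Even n) (hn2 : n ≤ 2 * j + 1) (hnj : n ≠ j) :
    Tendsto (fun ε : ℝ =>
      (fun (q c d : ℂ) =>
        ((1 - c * d * q ^ (n : ℤ)) * (d - c * q ^ ((n : ℤ) - j)) *
            (1 - q ^ ((n : ℤ) - 2 * j - 1)) /
          (2 * c * d * (1 - q ^ (2 * (n : ℤ) - 2 * j - 1)) * (1 + q ^ ((n : ℤ) - j)))) /
        (2 * Complex.I * (ε : ℂ)))
        (-Complex.exp (ε : ℂ))
        (Complex.I * Complex.exp ((ε : ℂ) * (a + b - j) / 2))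
        (Complex.I * Complex.exp ((ε : ℂ) * (-a + b - j) / 2)))
      (nhdsWithin 0 (Set.Ioi 0)) (nhds ((((n : ℝ) - j + a) / 4 : ℝ) : ℂ)) := by
  have hQdef : True := trivial
  set Q : ℝ → ℂ := fun ε => -Complex.exp (ε : ℂ) with hQ'
  set C : ℝ → ℂ := fun ε => Complex.I * Complex.exp ((ε : ℂ) * (a + b - j) / 2) with hC'
  set D : ℝ → ℂ := fun ε => Complex.I * Complex.exp ((ε : ℂ) * (-a + b - j) / 2) with hD'
  -- parities
  have hm1 : Even (n : ℤ) := Int.even_coe_nat n |>.mpr hn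
  have hmj : Even (j : ℤ) := Int.even_coe_nat j |>.mpr hj
  have hm2 : Even ((n : ℤ) - j) := hm1.sub hmj
  have hm3 : Odd ((n : ℤ) - 2 * j - 1) := (hm1.sub (hmj.mul_left 2)).sub_odd odd_one
  have hm4 : Odd (2 * (n : ℤ) - 2 * j - 1) := ((hm1.mul_left 2).sub (hmj.mul_left 2)).sub_odd odd_one
  -- basic limits
  have hQ : Tendsto Q (nhds 0) (nhds (-1)) := by
    rw [hQ']
    have h : Continuous fun ε : ℝ => -Complex.exp (ε : ℂ) :=
      (Complex.continuous_exp.comp Complex.continuous_ofReal).neg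
    simpa using h.tendsto 0
  have hC : Tendsto C (nhds 0) (nhds Complex.I) := by
    rw [hC']
    have h : Continuous fun ε : ℝ => Complex.I * Complex.exp ((ε : ℂ) * (a + b - j) / 2) :=
      continuous_const.mul (Complex.continuous_exp.comp (by continuity))
    simpa using h.tendsto 0
  have hD : Tendsto D (nhds 0) (nhds Complex.I) := by
    rw [hD']
    have h : Continuous fun ε : ℝ => Complex.I * Complex.exp ((ε : ℂ) * (-a + b - j) / 2) :=
      continuous_const.mul (Complex.continuous_exp.comp (by continuity))
    simpa using h.tendsto 0
  have hQp : ∀ m : ℤ, Tendsto (fun ε => Q ε ^ m) (nhds 0) (nhds ((-1 : ℂ) ^ m)) := fun m =>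
    ((continuousAt_zpow₀ (-1 : ℂ) m (Or.inl (by norm_num))).tendsto).comp hQ
  have hQ1 : Tendsto (fun ε => Q ε ^ (n : ℤ)) (nhds 0) (nhds 1) := by
    simpa [hm1.neg_one_zpow] using hQp (n : ℤ)
  have hQ2 : Tendsto (fun ε => Q ε ^ ((n : ℤ) - j)) (nhds 0) (nhds 1) := by
    simpa [hm2.neg_one_zpow] using hQp ((n : ℤ) - j)
  have hQ3 : Tendsto (fun ε => Q ε ^ ((n : ℤ) - 2 * j - 1)) (nhds 0) (nhds (-1)) := by
    simpa [hm3.neg_one_zpow] using hQp ((n : ℤ) - 2 * j - 1)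
  have hQ4 : Tendsto (fun ε => Q ε ^ (2 * (n : ℤ) - 2 * j - 1)) (nhds 0) (nhds (-1)) := by
    simpa [hm4.neg_one_zpow] using hQp (2 * (n : ℤ) - 2 * j - 1)
  -- part 1 : the regular factor
  have hnum : Tendsto (fun ε =>
      (1 - C ε * D ε * Q ε ^ (n : ℤ)) * (1 - Q ε ^ ((n : ℤ) - 2 * j - 1)))
      (nhds 0) (nhds (4 : ℂ)) := by
    have h := ((tendsto_const_nhds (x := (1:ℂ))).sub ((hC.mul hD).mul hQ1)).mul
      ((tendsto_const_nhds (x := (1:ℂ))).sub hQ3)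
    convert h using 2
    simp [Complex.I_mul_I]
    norm_num
  have hden : Tendsto (fun ε =>
      2 * C ε * D ε * (1 - Q ε ^ (2 * (n : ℤ) - 2 * j - 1)) * (1 + Q ε ^ ((n : ℤ) - j)))
      (nhds 0) (nhds (-8 : ℂ)) := by
    have h := ((((tendsto_const_nhds (x := (2:ℂ))).mul hC).mul hD).mul
      ((tendsto_const_nhds (x := (1:ℂ))).sub hQ4)).mul
      ((tendsto_const_nhds (x := (1:ℂ))).add hQ2)
    convert h using 2
    linear_combination (-8:ℂ) * Complex.I_mul_I
  have hf1 : Tendsto (fun ε =>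
      (1 - C ε * D ε * Q ε ^ (n : ℤ)) * (1 - Q ε ^ ((n : ℤ) - 2 * j - 1)) /
        (2 * C ε * D ε * (1 - Q ε ^ (2 * (n : ℤ) - 2 * j - 1)) * (1 + Q ε ^ ((n : ℤ) - j))))
      (nhds 0) (nhds (-(1/2) : ℂ)) := by
    have h := hnum.div hden (by norm_num)
    convert h using 2
    all_goals norm_num
  -- part 2 : the slope factor
  set α : ℂ := ((-a : ℝ) + b - j) / 2 with hα
  set β : ℂ := ((a : ℝ) + b - j) / 2 + ((n : ℝ) - j) with hβ
  set F : ℝ → ℂ := fun t => Complex.exp (t * α) - Complex.exp (t * β) with hF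
  have hder : HasDerivAt F (α - β) 0 := by
    have h1 : HasDerivAt (fun t : ℝ => ((t : ℂ) * α)) α 0 := by
      simpa using (Complex.ofRealCLM.hasDerivAt (x := (0:ℝ))).mul_const α
    have h2 : HasDerivAt (fun t : ℝ => ((t : ℂ) * β)) β 0 := by
      simpa using (Complex.ofRealCLM.hasDerivAt (x := (0:ℝ))).mul_const β
    have h := h1.cexp.sub h2.cexp
    rw [hF]
    simp only [Complex.ofReal_zero, zero_mul, Complex.exp_zero, one_mul] at h
    exact h
  have hslope : Tendsto (slope F 0) (nhdsWithin 0 (Set.Ioi 0)) (nhds (α - β)) :=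
    (hasDerivAt_iff_tendsto_slope.mp hder).mono_left
      (nhdsWithin_mono 0 (fun x hx => ne_of_gt hx))
  have hf2 : Tendsto (fun ε : ℝ => (D ε - C ε * Q ε ^ ((n : ℤ) - j)) / (2 * Complex.I * ε))
      (nhdsWithin 0 (Set.Ioi 0)) (nhds ((α - β) / 2)) := by
    have heq : ∀ ε ∈ Set.Ioi (0:ℝ),
        (D ε - C ε * Q ε ^ ((n : ℤ) - j)) / (2 * Complex.I * ε) = slope F 0 ε / 2 := by
      intro ε hε
      have hε0 : (ε : ℂ) ≠ 0 := Complex.ofReal_ne_zero.mpr (ne_of_gt hε)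
      have hq2 : Q ε ^ ((n : ℤ) - j) = Complex.exp ((((n : ℤ) - j : ℤ) : ℂ) * ε) :=
        negexp_zpow_even _ _ hm2
      have hda : D ε = Complex.I * Complex.exp ((ε : ℂ) * α) := by
        rw [hD', hα]; push_cast; ring_nf
      have hcb : C ε * Q ε ^ ((n : ℤ) - j) = Complex.I * Complex.exp ((ε : ℂ) * β) := by
        rw [hC', hq2, hβ, mul_assoc, ← Complex.exp_add]
        push_cast; ring_nf
      rw [hda, hcb, slope_def_module, hF]
      simp only [sub_zero, Complex.ofReal_zero, zero_mul, Complex.exp_zero, sub_self,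
        Complex.real_smul, Complex.ofReal_inv]
      field_simp
    refine Tendsto.congr' (eventuallyEq_nhdsWithin_of_eqOn fun ε hε => (heq ε hε).symm) ?_
    simpa using hslope.div_const 2
  -- combine
  have key : Tendsto (fun ε : ℝ =>
      ((1 - C ε * D ε * Q ε ^ (n : ℤ)) * (1 - Q ε ^ ((n : ℤ) - 2 * j - 1)) /
        (2 * C ε * D ε * (1 - Q ε ^ (2 * (n : ℤ) - 2 * j - 1)) * (1 + Q ε ^ ((n : ℤ) - j)))) *
      ((D ε - C ε * Q ε ^ ((n : ℤ) - j)) / (2 * Complex.I * ε)))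
      (nhdsWithin 0 (Set.Ioi 0)) (nhds ((-(1/2) : ℂ) * ((α - β) / 2))) :=
    (hf1.mono_left nhdsWithin_le_nhds).mul hf2
  have hval : (-(1/2) : ℂ) * ((α - β) / 2) = ((((n : ℝ) - j + a) / 4 : ℝ) : ℂ) := by
    rw [hα, hβ]; push_cast; ring
  rw [← hval]
  refine key.congr fun ε => ?_
  simp only [hQ', hC', hD']
  ring
end

section
/- Let j be a positive even integer and define u_n = A_{n-1}^0 C_n^0 with α = 1/2, where A_n^0 = -(n-j-a)/4 for n even ≠ j, A_n^0 = -(n+1)(n-j-b)/(4(n-j)) for n odd, A_j^0 = a/4, C_n^0 = (n-j+a)/4 for n even ≠ j, C_n^0 = (n-2j-1)(n-j+b)/(4(n-j)) for n odd, C_j^0 = a/4. Then the product u_1 · u_2 · ... · u_{2j} equals [ (1)_j · ((b+1-j)/2)_j · (-(j+a)/2)_j / (2^{2j} · ((1-j)/2)_j) ]², where (x)_k denotes the rising Pochhammer symbol x(x+1)···(x+k-1). -/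
private lemma poch_prod (n : ℕ) (x : ℝ) :
    (ascPochhammer ℝ n).eval x = ∏ k ∈ Finset.range n, (x + k) := by
  induction n with
  | zero => simp
  | succ m ih => rw [ascPochhammer_succ_eval, ih, Finset.prod_range_succ]

private lemma prod_pair (g : ℕ → ℝ) (j : ℕ) :
    ∏ i ∈ Finset.range (2 * j), g i
      = ∏ k ∈ Finset.range j, (g (2 * k) * g (2 * k + 1)) := by
  induction j with
  | zero => simp
  | succ m ih =>
      have h : 2 * (m + 1) = 2 * m + 1 + 1 := by ring
      rw [h, Finset.prod_range_succ, Finset.prod_range_succ, Finset.prod_range_succ, ih]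
      ring

private lemma fact_prod (j : ℕ) :
    ∏ k ∈ Finset.range j, ((k : ℝ) + 1) = (Nat.factorial j : ℝ) := by
  rw [← Finset.prod_range_add_one_eq_factorial j]
  push_cast
  ring

set_option maxHeartbeats 1000000

/-- At `α = 1/2`, the product `u_1 ⋯ u_{2j}` of the off-diagonal entries of the
para-Bannai-Ito Jacobi matrix equals `h_{2j}²` expressed via Pochhammer symbols. -/
theorem stmt10 (j : ℕ) (hj : Even j) (hj0 : 0 < j) (a b : ℝ) :
    (∏ n ∈ Finset.Icc 1 (2 * j), A0 j a b (1/2) (n - 1) * C0 j a b (1/2) n) =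
      (((ascPochhammer ℝ j).eval (1 : ℝ) *
          (ascPochhammer ℝ j).eval ((b + 1 - (j : ℝ)) / 2) *
          (ascPochhammer ℝ j).eval (-((j : ℝ) + a) / 2)) /
        (2 ^ (2 * j) * (ascPochhammer ℝ j).eval ((1 - (j : ℝ)) / 2))) ^ 2 := by
  have hj2 : j % 2 = 0 := Nat.even_iff.mp hj
  -- key products
  set P1 : ℝ := ∏ k ∈ Finset.range j, ((2 * k : ℝ) + 2 - j + a) with hP1
  set P2 : ℝ := ∏ k ∈ Finset.range j, ((2 * k : ℝ) + 1 - j + b) with hP2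
  set Q : ℝ := ∏ k ∈ Finset.range j, ((2 * k : ℝ) + 1 - j) with hQdef
  have hxne : ∀ k : ℕ, ((2 * k : ℝ) + 1 - j) ≠ 0 := by
    intro k h
    have h1 : ((2 * k + 1 : ℕ) : ℝ) = (j : ℝ) := by push_cast; linarith
    have h2 : 2 * k + 1 = j := Nat.cast_injective h1
    omega
  have hQ : Q ≠ 0 := Finset.prod_ne_zero_iff.mpr fun k _ => hxne k
  -- reflect lemmas
  have refl1 : ∏ k ∈ Finset.range j, ((j : ℝ) + a - 2 * k) = P1 := by
    rw [hP1, ← Finset.prod_range_reflect]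
    refine Finset.prod_congr rfl fun k hk => ?_
    have hk' : k < j := Finset.mem_range.mp hk
    have h : j - 1 - k = j - (k + 1) := by omega
    rw [h, Nat.cast_sub (by omega)]
    push_cast; ring
  have refl2 : ∏ k ∈ Finset.range j, ((j : ℝ) + b - 2 * k - 1) = P2 := by
    rw [hP2, ← Finset.prod_range_reflect]
    refine Finset.prod_congr rfl fun k hk => ?_
    have hk' : k < j := Finset.mem_range.mp hk
    have h : j - 1 - k = j - (k + 1) := by omega
    rw [h, Nat.cast_sub (by omega)]
    push_cast; ring
  have reflf : ∏ k ∈ Finset.range j, ((j : ℝ) - k) = (Nat.factorial j : ℝ) := by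
    rw [← fact_prod j, ← Finset.prod_range_reflect]
    refine Finset.prod_congr rfl fun k hk => ?_
    have hk' : k < j := Finset.mem_range.mp hk
    have h : j - 1 - k = j - (k + 1) := by omega
    rw [h, Nat.cast_sub (by omega)]
    push_cast; ring
  -- evaluate the LHS
  have hL : (∏ n ∈ Finset.Icc 1 (2 * j), A0 j a b (1/2) (n - 1) * C0 j a b (1/2) n)
      = ∏ k ∈ Finset.range j,
          ((((j : ℝ) + a - 2 * k) * ((2 * k : ℝ) - 2 * j) * ((2 * k : ℝ) + 1 - j + b)
            * ((2 * k : ℝ) + 2) * ((j : ℝ) + b - 2 * k - 1) * ((2 * k : ℝ) + 2 - j + a))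
            / (256 * ((2 * k : ℝ) + 1 - j) ^ 2)) := by
    have hIcc : Finset.Icc 1 (2 * j) = Finset.image (fun i => i + 1) (Finset.range (2 * j)) := by
      ext n
      simp only [Finset.mem_Icc, Finset.mem_image, Finset.mem_range]
      constructor
      · rintro ⟨h1, h2⟩; exact ⟨n - 1, by omega, by omega⟩
      · rintro ⟨m, hm, rfl⟩; omega
    rw [hIcc, Finset.prod_image (by intro x _ y _ h; simp only at h; omega)]
    rw [prod_pair (fun i => A0 j a b (1/2) (i + 1 - 1) * C0 j a b (1/2) (i + 1)) j]
    refine Finset.prod_congr rfl fun k hk => ?_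
    have hA1 : A0 j a b (1/2) (2 * k) = ((j : ℝ) + a - 2 * k) / 4 := by
      by_cases h : 2 * k = j
      · have hc : (j : ℝ) = 2 * k := by exact_mod_cast h.symm
        simp only [A0, if_pos h, hc]; push_cast; ring
      · simp only [A0, if_neg h, if_pos (show 2 * k % 2 = 0 by omega)]
        push_cast; ring
    have hC1 : C0 j a b (1/2) (2 * k + 1)
        = (((2 * k : ℝ) + 1 - 2 * j - 1) * ((2 * k : ℝ) + 1 - j + b))
          / (4 * ((2 * k : ℝ) + 1 - j)) := by
      have h : 2 * k + 1 ≠ j := by omega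
      simp only [C0, if_neg h, if_neg (show ¬(2 * k + 1) % 2 = 0 by omega)]
      push_cast; ring_nf
    have hA2 : A0 j a b (1/2) (2 * k + 1)
        = -(((2 * k : ℝ) + 1 + 1) * ((2 * k : ℝ) + 1 - j - b))
          / (4 * ((2 * k : ℝ) + 1 - j)) := by
      have h : 2 * k + 1 ≠ j := by omega
      simp only [A0, if_neg h, if_neg (show ¬(2 * k + 1) % 2 = 0 by omega)]
      push_cast; ring_nf
    have hC2 : C0 j a b (1/2) (2 * k + 2) = ((2 * k : ℝ) + 2 - j + a) / 4 := by
      by_cases h : 2 * k + 2 = j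
      · have hc : (j : ℝ) = 2 * k + 2 := by exact_mod_cast h.symm
        simp only [C0, if_pos h, hc]; push_cast; ring
      · simp only [C0, if_neg h, if_pos (show (2 * k + 2) % 2 = 0 by omega)]
        push_cast; ring
    have e1 : 2 * k + 1 - 1 = 2 * k := by omega
    have e2 : 2 * k + 1 + 1 - 1 = 2 * k + 1 := by omega
    have e3 : 2 * k + 1 + 1 = 2 * k + 2 := by omega
    rw [e1, e2, e3, hA1, hC1, hA2, hC2]
    have hx := hxne k
    field_simp
    ring
  rw [hL]
  -- split the LHS product
  have hsplit : ∏ k ∈ Finset.range j,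
          ((((j : ℝ) + a - 2 * k) * ((2 * k : ℝ) - 2 * j) * ((2 * k : ℝ) + 1 - j + b)
            * ((2 * k : ℝ) + 2) * ((j : ℝ) + b - 2 * k - 1) * ((2 * k : ℝ) + 2 - j + a))
            / (256 * ((2 * k : ℝ) + 1 - j) ^ 2))
      = (P1 * (2 ^ j * (Nat.factorial j : ℝ)) * P2 * (2 ^ j * (Nat.factorial j : ℝ)) * P2 * P1)
          / (256 ^ j * Q ^ 2) := by
    have hd : ∏ k ∈ Finset.range j, ((2 * k : ℝ) - 2 * j)
        = 2 ^ j * (Nat.factorial j : ℝ) := by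
      have : ∏ k ∈ Finset.range j, ((2 * k : ℝ) - 2 * j)
          = (∏ _k ∈ Finset.range j, (-2 : ℝ)) * ∏ k ∈ Finset.range j, ((j : ℝ) - k) := by
        rw [← Finset.prod_mul_distrib]
        exact Finset.prod_congr rfl fun k _ => by ring
      rw [this, reflf, Finset.prod_const, Finset.card_range, hj.neg_pow]
    have he : ∏ k ∈ Finset.range j, ((2 * k : ℝ) + 2)
        = 2 ^ j * (Nat.factorial j : ℝ) := by
      have : ∏ k ∈ Finset.range j, ((2 * k : ℝ) + 2)
          = (∏ _k ∈ Finset.range j, (2 : ℝ)) * ∏ k ∈ Finset.range j, ((k : ℝ) + 1) := by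
        rw [← Finset.prod_mul_distrib]
        exact Finset.prod_congr rfl fun k _ => by ring
      rw [this, fact_prod, Finset.prod_const, Finset.card_range]
    rw [Finset.prod_div_distrib, Finset.prod_mul_distrib, Finset.prod_mul_distrib,
      Finset.prod_mul_distrib, Finset.prod_mul_distrib, Finset.prod_mul_distrib,
      refl1, refl2, hd, he, Finset.prod_mul_distrib, Finset.prod_const,
      Finset.prod_pow, Finset.card_range]
  rw [hsplit]
  -- evaluate the RHS Pochhammer symbols
  have e1 : (ascPochhammer ℝ j).eval (1 : ℝ) = (Nat.factorial j : ℝ) := by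
    rw [poch_prod, ← fact_prod]
    exact Finset.prod_congr rfl fun k _ => by ring
  have e2 : (ascPochhammer ℝ j).eval ((b + 1 - (j : ℝ)) / 2) = P2 / 2 ^ j := by
    rw [poch_prod, hP2,
      show (2:ℝ) ^ j = ∏ _k ∈ Finset.range j, (2:ℝ) by
        rw [Finset.prod_const, Finset.card_range],
      ← Finset.prod_div_distrib]
    exact Finset.prod_congr rfl fun k _ => by ring
  have e3 : (ascPochhammer ℝ j).eval (-((j : ℝ) + a) / 2) = P1 / 2 ^ j := by
    have step : (ascPochhammer ℝ j).eval (-((j : ℝ) + a) / 2)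
        = ∏ k ∈ Finset.range j, (-(((j : ℝ) + a - 2 * k) / 2)) := by
      rw [poch_prod]
      exact Finset.prod_congr rfl fun k _ => by ring
    rw [step]
    have : ∏ k ∈ Finset.range j, (-(((j : ℝ) + a - 2 * k) / 2))
        = (-1) ^ j * ∏ k ∈ Finset.range j, (((j : ℝ) + a - 2 * k) / 2) := by
      calc ∏ k ∈ Finset.range j, (-(((j : ℝ) + a - 2 * k) / 2))
          = (∏ _k ∈ Finset.range j, (-1 : ℝ))
              * ∏ k ∈ Finset.range j, (((j : ℝ) + a - 2 * k) / 2) := by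
            rw [← Finset.prod_mul_distrib]
            exact Finset.prod_congr rfl fun k _ => by ring
        _ = (-1) ^ j * ∏ k ∈ Finset.range j, (((j : ℝ) + a - 2 * k) / 2) := by
            rw [Finset.prod_const, Finset.card_range]
    rw [this, hj.neg_one_pow, one_mul,
      show (2:ℝ) ^ j = ∏ _k ∈ Finset.range j, (2:ℝ) by
        rw [Finset.prod_const, Finset.card_range],
      ← refl1, ← Finset.prod_div_distrib]
  have e4 : (ascPochhammer ℝ j).eval ((1 - (j : ℝ)) / 2) = Q / 2 ^ j := by
    rw [poch_prod, hQdef,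
      show (2:ℝ) ^ j = ∏ _k ∈ Finset.range j, (2:ℝ) by
        rw [Finset.prod_const, Finset.card_range],
      ← Finset.prod_div_distrib]
    exact Finset.prod_congr rfl fun k _ => by ring
  rw [e1, e2, e3, e4]
  have h2j : (2:ℝ) ^ j ≠ 0 := by positivity
  have h256 : (256:ℝ) ^ j = ((2:ℝ) ^ j) ^ 8 := by
    rw [← pow_mul, pow_mul']; norm_num
  have h22j : (2:ℝ) ^ (2 * j) = ((2:ℝ) ^ j) ^ 2 := by rw [pow_mul']
  rw [h256, h22j]
  field_simp
end
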